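/- A group G is left-orderable if and only if every finitely generated subgroup of G is left-orderable. -/

import Mathlib

/-- A group `G` is left-orderable if there is a strict total order `<` on `G` such that
`g < h` implies `f*g < f*h` for all `f, g, h`. -/
def LeftOrderable (G : Type*) [Group G] : Prop :=
  ∃ r : G → G → Prop, IsStrictTotalOrder G r ∧ ∀ f g h : G, r g h → r (f * g) (f * h)

/-- A group is left-orderable if and only if every finitely generated subgroup is
left-orderable. -/
theorem leftOrderable_iff_fg_subgroups (G : Type*) [Group G] :
    LeftOrderable G ↔ ∀ H : Subgroup G, H.FG → LeftOrderable H := by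
  constructor
  · rintro ⟨r, hr, hinv⟩ H _
    refine ⟨fun g h => r ↑g ↑h, ?_, fun f g h hgh => hinv ↑f ↑g ↑h hgh⟩
    haveI := hr
    exact
      { trichotomous := fun a b h1 h3 => Subtype.ext (hr.trichotomous (a : G) (b : G) h1 h3)
        irrefl := fun a => hr.irrefl (a : G)
        trans := fun a b c hab hbc => hr.trans _ _ _ hab hbc }
  · intro h
    classical
    haveI hne : Nonempty {H : Subgroup G // H.FG} :=
      ⟨⟨⊥, ⟨∅, by simp⟩⟩⟩
    choose r hr hinv using fun i : {H : Subgroup G // H.FG} => h i.1 i.2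
    set I := {H : Subgroup G // H.FG}
    let A : Finset G → Set I := fun s => {i | ∀ x ∈ s, x ∈ i.1}
    have hAne : ∀ s, (A s).Nonempty := by
      intro s
      refine ⟨⟨Subgroup.closure ↑s, ⟨s, rfl⟩⟩, fun x hx => ?_⟩
      exact Subgroup.subset_closure hx
    have hdir : Directed (· ≥ ·) fun s => (Filter.principal (A s) : Filter I) := by
      intro s t
      refine ⟨s ∪ t, Filter.principal_mono.2 ?_, Filter.principal_mono.2 ?_⟩ <;>
        · intro i hi x hx
          exact hi x (by simp [hx])
    have hF : Filter.NeBot (⨅ s, Filter.principal (A s)) :=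
      Filter.iInf_neBot_of_directed hdir fun s => Filter.principal_neBot_iff.2 (hAne s)
    set U : Ultrafilter I := @Ultrafilter.of I _ hF
    have hU : ∀ s : Finset G, A s ∈ U := fun s =>
      Ultrafilter.of_le _ (Filter.mem_iInf_of_mem s (Filter.mem_principal_self _))
    set R : G → G → Prop := fun g h =>
      {i : I | ∃ (hg : g ∈ i.1) (hh : h ∈ i.1), r i ⟨g, hg⟩ ⟨h, hh⟩} ∈ U with hR
    refine ⟨R, ?_, ?_⟩
    · refine
        { trichotomous := fun g h => ?_
          irrefl := fun g hg => ?_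
          trans := fun g h k hgh hhk => ?_ }
      · intro hn1 hn2
        by_cases hgh : g = h
        · exact hgh
        · have hS : A {g, h} ∈ U := hU {g, h}
          have hsub : A {g, h} ⊆
              {i : I | ∃ (hg : g ∈ i.1) (hh : h ∈ i.1), r i ⟨g, hg⟩ ⟨h, hh⟩} ∪
              {i : I | ∃ (hh : h ∈ i.1) (hg : g ∈ i.1), r i ⟨h, hh⟩ ⟨g, hg⟩} := by
            intro i hi
            have hgm : g ∈ i.1 := hi g (by simp)
            have hhm : h ∈ i.1 := hi h (by simp)
            by_cases h1 : r i ⟨g, hgm⟩ ⟨h, hhm⟩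
            · exact Or.inl ⟨hgm, hhm, h1⟩
            by_cases h3 : r i ⟨h, hhm⟩ ⟨g, hgm⟩
            · exact Or.inr ⟨hhm, hgm, h3⟩
            exact absurd (congrArg Subtype.val ((hr i).trichotomous _ _ h1 h3)) hgh
          have := Filter.mem_of_superset hS hsub
          rcases Ultrafilter.union_mem_iff.1 this with h1 | h2
          · exact absurd h1 hn1
          · exact absurd h2 hn2
      · have : {i : I | ∃ (h1 : g ∈ i.1) (h2 : g ∈ i.1), r i ⟨g, h1⟩ ⟨g, h2⟩} = ∅ := by
          ext i
          simp only [Set.mem_setOf_eq, Set.mem_empty_iff_false, iff_false, not_exists]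
          intro h1 h2
          exact (hr i).irrefl _
        rw [hR] at hg
        rw [this] at hg
        exact (Filter.empty_notMem (U : Filter I)) hg
      · have := Filter.inter_mem hgh hhk
        refine Filter.mem_of_superset this ?_
        rintro i ⟨⟨hg1, hh1, hr1⟩, ⟨hh2, hk2, hr2⟩⟩
        exact ⟨hg1, hk2, (hr i).trans _ _ _ hr1 hr2⟩
    · intro f g h hgh
      have hAf : A {f} ∈ U := hU {f}
      have := Filter.inter_mem hgh hAf
      refine Filter.mem_of_superset this ?_
      rintro i ⟨⟨hg1, hh1, hr1⟩, hfi⟩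
      have hf : f ∈ i.1 := hfi f (by simp)
      exact ⟨mul_mem hf hg1, mul_mem hf hh1,
        hinv i ⟨f, hf⟩ ⟨g, hg1⟩ ⟨h, hh1⟩ hr1⟩
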